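/- (Almost-sure eventual invertibility) Let C be the confusion matrix and assume C is invertible. Let Ĉ_n denote the empirical confusion matrix built from the first n samples of an iid sequence (x_1,y_1),(x_2,y_2),… drawn from P. Then almost surely, Ĉ_n is invertible for all but finitely many n (i.e., the event that Ĉ_n is not invertible occurs only finitely often with probability one). -/

import Mathlib

open MeasureTheory ProbabilityTheory Filter Matrix Topology

noncomputable section

/-- Population confusion matrix: `C i j = P (f⁻¹(i) × {j})`. -/
def confusion {X : Type*} [MeasurableSpace X] {k : ℕ}
    (P : Measure (X × Fin k)) (f : X → Fin k) : Matrix (Fin k) (Fin k) ℝ :=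
  fun i j => (P ((f ⁻¹' {i}) ×ˢ ({j} : Set (Fin k)))).toReal

/-- Empirical confusion matrix from `n` samples. -/
def empConfusion {X Ω : Type*} {k : ℕ}
    (f : X → Fin k) (Z : ℕ → Ω → X × Fin k) (n : ℕ) (ω : Ω) : Matrix (Fin k) (Fin k) ℝ :=
  fun i j => ((Finset.range n).filter (fun l => f (Z l ω).1 = i ∧ (Z l ω).2 = j)).card / n

/-- Almost-sure eventual invertibility. If the population confusion matrix
is invertible, then almost surely the empirical confusion matrix is invertible for all but
finitely many `n`. -/
theorem empirical_confusion_eventually_invertible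
    {X : Type*} [MeasurableSpace X] {k : ℕ} (hk : 1 ≤ k)
    (P : Measure (X × Fin k)) [IsProbabilityMeasure P]
    (f : X → Fin k) (hf : Measurable f)
    {Ω : Type*} [MeasurableSpace Ω] (μ : Measure Ω) [IsProbabilityMeasure μ]
    (Z : ℕ → Ω → X × Fin k)
    (hZmeas : ∀ l, Measurable (Z l)) (hZlaw : ∀ l, μ.map (Z l) = P)
    (hindep : iIndepFun Z μ)
    (A3 : IsUnit (confusion P f).det) :
    ∀ᵐ ω ∂μ, ∀ᶠ n in atTop, IsUnit (empConfusion f Z n ω).det := by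
  have key : ∀ i j : Fin k, ∀ᵐ ω ∂μ,
      Tendsto (fun n => empConfusion f Z n ω i j) atTop (𝓝 (confusion P f i j)) := by
    intro i j
    set S : Set (X × Fin k) := (f ⁻¹' {i}) ×ˢ ({j} : Set (Fin k)) with hS
    have hSmeas : MeasurableSet S :=
      (hf (measurableSet_singleton i)).prod (measurableSet_singleton j)
    set g : X × Fin k → ℝ := S.indicator (fun _ => (1 : ℝ)) with hg
    have hgmeas : Measurable g := measurable_const.indicator hSmeas
    set Y : ℕ → Ω → ℝ := fun l ω => g (Z l ω) with hY
    have hident : ∀ l, IdentDistrib (Y l) (Y 0) μ μ := by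
      intro l
      have hz : IdentDistrib (Z l) (Z 0) μ μ :=
        ⟨(hZmeas l).aemeasurable, (hZmeas 0).aemeasurable, by rw [hZlaw l, hZlaw 0]⟩
      exact hz.comp hgmeas
    have hint : Integrable (Y 0) μ := by
      have : Integrable g (μ.map (Z 0)) := by
        rw [hZlaw 0]
        exact (integrable_const (1 : ℝ)).indicator hSmeas
      exact (integrable_map_measure hgmeas.aestronglyMeasurable
        (hZmeas 0).aemeasurable).mp this
    have hpind : Pairwise (Function.onFun (IndepFun · · μ) Y) := fun l m hlm =>
      (hindep.indepFun hlm).comp hgmeas hgmeas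
    have hmean : μ[Y 0] = confusion P f i j := by
      have h1 : μ[Y 0] = ∫ z, g z ∂(μ.map (Z 0)) :=
        (integral_map (hZmeas 0).aemeasurable hgmeas.aestronglyMeasurable).symm
      rw [h1, hZlaw 0, hg, integral_indicator hSmeas, setIntegral_const, smul_eq_mul,
        mul_one]
      rfl
    have := strong_law_ae_real Y hint hpind hident
    rw [hmean] at this
    filter_upwards [this] with ω hω
    have hsum : ∀ n : ℕ, (∑ l ∈ Finset.range n, Y l ω) =
        ((Finset.range n).filter (fun l => f (Z l ω).1 = i ∧ (Z l ω).2 = j)).card := by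
      intro n
      rw [Finset.card_filter]
      push_cast
      apply Finset.sum_congr rfl
      intro l _
      have hiff : Z l ω ∈ S ↔ (f (Z l ω).1 = i ∧ (Z l ω).2 = j) := by
        rw [hS, Set.mem_prod]
        simp
      show S.indicator (fun _ => (1 : ℝ)) (Z l ω) = _
      by_cases h : f (Z l ω).1 = i ∧ (Z l ω).2 = j
      · rw [Set.indicator_of_mem (hiff.2 h), if_pos h]
      · rw [Set.indicator_of_notMem (fun hm => h (hiff.1 hm)), if_neg h]
    have heq : (fun n : ℕ => empConfusion f Z n ω i j)
        = fun n : ℕ => (∑ l ∈ Finset.range n, Y l ω) / n := by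
      funext n
      rw [hsum n]
      rfl
    rw [heq]
    exact hω
  filter_upwards [ae_all_iff.2 fun i => ae_all_iff.2 (key i)] with ω hω
  have htend : Tendsto (fun n => empConfusion f Z n ω) atTop (𝓝 (confusion P f)) := by
    refine tendsto_pi_nhds.2 fun i => tendsto_pi_nhds.2 fun j => hω i j
  have hdet : Tendsto (fun n => (empConfusion f Z n ω).det) atTop
      (𝓝 (confusion P f).det) :=
    ((Continuous.matrix_det continuous_id).tendsto _).comp htend
  have hne : (confusion P f).det ≠ 0 := A3.ne_zero
  filter_upwards [hdet.eventually_ne hne] with n hn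
  exact isUnit_iff_ne_zero.2 hn

end
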